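/- Let F be a field and S an infinite sequence over F with nonzero generating function S̄, partial quotients q^{(i)}, and n_i = deg q_1^{(i-1)} + deg q_1^{(i)} for i ≥ 1 (with n_{i+1} = ∞ if q^{(i+1)} does not exist). Fix i ≥ 1 and n ≥ 1. Then the following are equivalent: (i) n_i ≤ n < n_{i+1}; (ii) q^{(i-1)} is not a solution for s = S|n and q^{(i)} is a minimal solution for s. In particular, the linear complexity of S|n equals deg q_1^{(i)} for n ∈ [n_i, n_{i+1}). -/

import Mathlib

open Polynomial HahnSeries in
/-- Polynomial part of a Laurent series in `x⁻¹` (the series variable is `x⁻¹`,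
so the coefficient of `xᵏ` is the coefficient at exponent `-k`). -/
noncomputable def polPart {F : Type*} [Field F] (L : LaurentSeries F) : Polynomial F :=
  ∑ k ∈ Finset.range ((-L.order).toNat + 1), Polynomial.C (L.coeff (-(k : ℤ))) * Polynomial.X ^ k

/-- Embedding of polynomials in `x` into Laurent series in `x⁻¹`. -/
noncomputable def toL {F : Type*} [Field F] (p : Polynomial F) : LaurentSeries F :=
  ∑ k ∈ Finset.range (p.natDegree + 1), HahnSeries.single (-(k : ℤ)) (p.coeff k)

/-- Generating function `S̄ = Σ_{i ≤ 0} S_i xⁱ` of an infinite sequence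
(`S k` denotes `S₋ₖ`), as a Laurent series in `x⁻¹`. -/
noncomputable def sbar {F : Type*} [Field F] (S : ℕ → F) : LaurentSeries F :=
  HahnSeries.ofPowerSeries ℤ F (PowerSeries.mk S)

/-- The remainders `b_i` of the continued-fraction algorithm for `S̄` (junk `0` after it stops). -/
noncomputable def cfB {F : Type*} [Field F] (S : ℕ → F) : ℕ → LaurentSeries F
  | 0 => HahnSeries.single 1 1 * sbar S
  | (i + 1) => (cfB S i)⁻¹ - toL (polPart (cfB S i)⁻¹)

/-- `cfA S i` is the partial-quotient polynomial `a_{i+1}`. -/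
noncomputable def cfA {F : Type*} [Field F] (S : ℕ → F) (i : ℕ) : Polynomial F :=
  polPart (cfB S i)⁻¹

/-- `cfQ S i = (q^{(i-1)}, q^{(i)})`, the consecutive partial quotients of `S̄`,
with `q^{(-1)} = (0,1)`, `q^{(0)} = (1,0)`, `q^{(i+1)} = a_{i+1} q^{(i)} + q^{(i-1)}`. -/
noncomputable def cfQ {F : Type*} [Field F] (S : ℕ → F) :
    ℕ → (Polynomial F × Polynomial F) × (Polynomial F × Polynomial F)
  | 0 => ((0, 1), (1, 0))
  | (i + 1) => ((cfQ S i).2,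
      (cfA S i * (cfQ S i).2.1 + (cfQ S i).1.1,
       cfA S i * (cfQ S i).2.2 + (cfQ S i).1.2))

/-- `vLE L m` : the exponential valuation of `L` (largest `x`-degree) is `≤ m`. -/
def vLE {F : Type*} [Field F] (L : LaurentSeries F) (m : ℤ) : Prop :=
  ∀ i : ℤ, m < i → L.coeff (-i) = 0

/-- `IsPosPart L g` : `x·g = [L]`, the strictly-positive `x`-degree part of `L`. -/
def IsPosPart {F : Type*} [Field F] (L : LaurentSeries F) (g : Polynomial F) : Prop :=
  ∀ k : ℕ, g.coeff k = L.coeff (-(k + 1 : ℤ))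
open Polynomial in
/-- φ of degree d satisfies the annihilating condition for the length-`n` sequence
`s₀, s₋₁, …, s₁₋ₙ` (where `s k` denotes `s₋ₖ`). -/
def AnnCond {D : Type*} [CommRing D] (n : ℕ) (s : ℕ → D) (φ : Polynomial D) : Prop :=
  ∀ t : ℕ, t + φ.natDegree + 1 ≤ n →
    ∑ j ∈ Finset.range (φ.natDegree + 1), φ.coeff j * s (t + j) = 0

/-- φ is a nonzero annihilating polynomial of the length-`n` sequence `s`. -/
def Annihilates {D : Type*} [CommRing D] (n : ℕ) (s : ℕ → D) (φ : Polynomial D) : Prop :=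
  φ ≠ 0 ∧ AnnCond n s φ

/-- Linear complexity: minimal degree of a nonzero annihilating polynomial. -/
noncomputable def LC {D : Type*} [CommRing D] (n : ℕ) (s : ℕ → D) : ℕ :=
  sInf {d | ∃ φ : Polynomial D, Annihilates n s φ ∧ φ.natDegree = d}

/-- `x·ψ = [φ·s̄]`, the strictly-positive-degree part of `φ·s̄`, expressed coefficientwise. -/
def SeqNum {D : Type*} [CommRing D] (n : ℕ) (s : ℕ → D) (φ ψ : Polynomial D) : Prop :=
  ∀ k : ℕ, ψ.coeff k = ∑ j ∈ Finset.range (φ.natDegree + 1),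
    if k + 1 ≤ j ∧ j - (k + 1) < n then φ.coeff j * s (j - (k + 1)) else 0

/-- `(φ, ψ)` is a solution for the length-`n` sequence `s`. -/
def IsSolution {D : Type*} [CommRing D] (n : ℕ) (s : ℕ → D) (φ ψ : Polynomial D) : Prop :=
  Annihilates n s φ ∧ SeqNum n s φ ψ

namespace CFAux
open Polynomial HahnSeries

variable {F : Type*} [Field F]

lemma coeff_sum {α : Type*} (s : Finset α) (f : α → LaurentSeries F) (e : ℤ) :
    (∑ a ∈ s, f a).coeff e = ∑ a ∈ s, (f a).coeff e :=
  map_sum (HahnSeries.coeff.addMonoidHom e) f s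

lemma toL_coeff (p : Polynomial F) (e : ℤ) :
    (toL p).coeff e = if e ≤ 0 then p.coeff (-e).toNat else 0 := by
  rw [toL, coeff_sum]
  by_cases he : e ≤ 0
  · rw [if_pos he]
    by_cases hk : (-e).toNat ≤ p.natDegree
    · rw [Finset.sum_eq_single ((-e).toNat)]
      · rw [coeff_single, if_pos (by omega)]
      · intro b _ hb
        apply coeff_single_of_ne
        omega
      · intro h
        exact absurd (Finset.mem_range.2 (by omega)) h
    · rw [Finset.sum_eq_zero, Polynomial.coeff_eq_zero_of_natDegree_lt (by omega)]
      intro k hk'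
      apply coeff_single_of_ne
      rw [Finset.mem_range] at hk'
      omega
  · rw [if_neg he, Finset.sum_eq_zero]
    intro k _
    apply coeff_single_of_ne
    omega

lemma toL_eq_eval₂ (p : Polynomial F) :
    toL p = Polynomial.eval₂ (HahnSeries.C : F →+* LaurentSeries F) (single (-1) 1) p := by
  rw [Polynomial.eval₂_eq_sum_range, toL]
  refine Finset.sum_congr rfl fun k _ => ?_
  rw [single_pow, HahnSeries.C_apply, single_mul_single]
  norm_num

lemma toL_mul (p q : Polynomial F) : toL (p * q) = toL p * toL q := by
  simp [toL_eq_eval₂, Polynomial.eval₂_mul]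

lemma toL_add (p q : Polynomial F) : toL (p + q) = toL p + toL q := by
  simp [toL_eq_eval₂, Polynomial.eval₂_add]

lemma toL_one : toL (1 : Polynomial F) = 1 := by
  simp [toL_eq_eval₂]

lemma toL_zero : toL (0 : Polynomial F) = 0 := by
  simp [toL_eq_eval₂]

lemma toL_coeff_neg_nat (p : Polynomial F) (k : ℕ) : (toL p).coeff (-(k : ℤ)) = p.coeff k := by
  rw [toL_coeff, if_pos (by omega)]
  congr 1
  omega

lemma toL_coeff_pos (p : Polynomial F) {e : ℤ} (he : 0 < e) : (toL p).coeff e = 0 := by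
  rw [toL_coeff, if_neg (by omega)]

lemma toL_eq_zero_iff {p : Polynomial F} : toL p = 0 ↔ p = 0 := by
  constructor
  · intro h
    ext k
    have := toL_coeff_neg_nat p k
    rw [h] at this
    simpa using this.symm
  · rintro rfl; exact toL_zero

lemma toL_coeff_lt (p : Polynomial F) {e : ℤ} (he : e < -(p.natDegree : ℤ)) :
    (toL p).coeff e = 0 := by
  rw [toL_coeff, if_pos (by omega), Polynomial.coeff_eq_zero_of_natDegree_lt (by omega)]

lemma toL_order {p : Polynomial F} (hp : p ≠ 0) : (toL p).order = -(p.natDegree : ℤ) := by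
  have h1 : (toL p).coeff (-(p.natDegree : ℤ)) ≠ 0 := by
    rw [toL_coeff_neg_nat]
    exact Polynomial.leadingCoeff_ne_zero.2 hp
  refine le_antisymm (order_le_of_coeff_ne_zero h1) ?_
  by_contra hlt
  push_neg at hlt
  exact (coeff_order_eq_zero.not.2 (fun h0 => h1 (by rw [h0]; simp)))
    (toL_coeff_lt p hlt)

lemma sbar_coeff (S : ℕ → F) (e : ℤ) :
    (sbar S).coeff e = if 0 ≤ e then S e.toNat else 0 := by
  by_cases he : 0 ≤ e
  · obtain ⟨n, rfl⟩ := Int.eq_ofNat_of_zero_le he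
    rw [if_pos he, sbar, ofPowerSeries_apply_coeff, PowerSeries.coeff_mk, Int.toNat_natCast]
  · rw [if_neg he, sbar, ofPowerSeries_apply, embDomain_notin_range]
    rintro ⟨n, hn⟩
    exact he (hn ▸ Int.natCast_nonneg n)

open Polynomial HahnSeries

variable {F : Type*} [Field F]

lemma polPart_coeff (L : LaurentSeries F) (k : ℕ) :
    (polPart L).coeff k = L.coeff (-(k : ℤ)) := by
  rw [polPart, Polynomial.finset_sum_coeff]
  simp_rw [Polynomial.coeff_C_mul, Polynomial.coeff_X_pow, mul_ite, mul_one, mul_zero]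
  by_cases hk : k ≤ (-L.order).toNat
  · rw [Finset.sum_eq_single k]
    · rw [if_pos rfl]
    · intro b _ hb
      rw [if_neg (fun h => hb h.symm)]
    · intro h
      exact absurd (Finset.mem_range.2 (by omega)) h
  · rw [Finset.sum_eq_zero]
    · rcases eq_or_ne L 0 with rfl | hL
      · simp
      · refine (coeff_eq_zero_of_lt_order ?_).symm
        rcases le_or_gt L.order 0 with h0 | h0
        · omega
        · omega
    · intro j hj
      rw [Finset.mem_range] at hj
      rw [if_neg (by omega)]

lemma sub_toL_polPart_coeff (L : LaurentSeries F) {e : ℤ} (he : e ≤ 0) :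
    (L - toL (polPart L)).coeff e = 0 := by
  rw [HahnSeries.coeff_sub, CFAux.toL_coeff, if_pos he, polPart_coeff]
  rw [show (-((-e).toNat : ℤ)) = e by omega, sub_self]

lemma polPart_zero : polPart (0 : LaurentSeries F) = 0 := by
  ext k
  rw [polPart_coeff]
  simp

lemma cfB_zero_coeff (S : ℕ → F) (e : ℤ) :
    (cfB S 0).coeff e = if 1 ≤ e then S (e - 1).toNat else 0 := by
  have h := coeff_single_mul_add (r := (1 : F)) (x := sbar S) (a := e - 1) (b := 1)
  rw [show e - 1 + 1 = e by ring] at h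
  rw [cfB, h, one_mul, sbar_coeff]
  by_cases he : 1 ≤ e
  · rw [if_pos (by omega), if_pos he]
  · rw [if_neg (by omega), if_neg he]

lemma cfB_proper (S : ℕ → F) (i : ℕ) {e : ℤ} (he : e ≤ 0) : (cfB S i).coeff e = 0 := by
  cases i with
  | zero => rw [cfB_zero_coeff, if_neg (by omega)]
  | succ j => exact sub_toL_polPart_coeff _ he

lemma cfB_order_pos {S : ℕ → F} {i : ℕ} (h : cfB S i ≠ 0) : 0 < (cfB S i).order := by
  by_contra hc
  push_neg at hc
  exact (coeff_order_eq_zero.not.2 h) (cfB_proper S i hc)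

lemma order_inv {L : LaurentSeries F} (h : L ≠ 0) : (L⁻¹).order = -L.order := by
  have h2 : L * L⁻¹ = 1 := mul_inv_cancel₀ h
  have h3 := order_mul h (inv_ne_zero h)
  rw [h2, order_one] at h3
  omega

lemma polPart_natDegree {L : LaurentSeries F} (hL : L ≠ 0) (h : L.order ≤ 0) :
    (polPart L).natDegree = (-L.order).toNat ∧ (polPart L).coeff (-L.order).toNat ≠ 0 := by
  have hc : (polPart L).coeff (-L.order).toNat ≠ 0 := by
    rw [polPart_coeff, show (-(((-L.order).toNat : ℕ) : ℤ)) = L.order by omega]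
    exact coeff_order_eq_zero.not.2 hL
  refine ⟨le_antisymm ?_ (Polynomial.le_natDegree_of_ne_zero hc), hc⟩
  rw [Polynomial.natDegree_le_iff_coeff_eq_zero]
  intro m hm
  rw [polPart_coeff]
  exact coeff_eq_zero_of_lt_order (by omega)

lemma cfA_ne_zero {S : ℕ → F} {i : ℕ} (h : cfB S i ≠ 0) : cfA S i ≠ 0 := by
  have hop := cfB_order_pos h
  have hinv := order_inv h
  obtain ⟨_, hc⟩ := polPart_natDegree (L := (cfB S i)⁻¹) (inv_ne_zero h) (by omega)
  exact fun h0 => hc (by rw [cfA] at h0; rw [h0]; simp)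

lemma cfA_natDegree {S : ℕ → F} {i : ℕ} (h : cfB S i ≠ 0) :
    ((cfA S i).natDegree : ℤ) = (cfB S i).order ∧ 1 ≤ (cfA S i).natDegree := by
  have hop := cfB_order_pos h
  have hinv := order_inv h
  obtain ⟨hd, _⟩ := polPart_natDegree (L := (cfB S i)⁻¹) (inv_ne_zero h) (by omega)
  rw [cfA, hd]
  omega

lemma cfB_succ_zero {S : ℕ → F} {i : ℕ} (h : cfB S i = 0) : cfB S (i + 1) = 0 := by
  rw [cfB, h, inv_zero, polPart_zero, toL_zero, sub_zero]

lemma cfB_ne_zero_of_le {S : ℕ → F} {i j : ℕ} (hji : j ≤ i) (h : cfB S i ≠ 0) :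
    cfB S j ≠ 0 := by
  induction i with
  | zero => rwa [Nat.le_zero.1 hji]
  | succ k ih =>
    rcases Nat.lt_succ_iff_lt_or_eq.1 (Nat.lt_succ_of_le hji) with hlt | rfl
    · exact ih (by omega) (fun h0 => h (cfB_succ_zero h0))
    · exact h

noncomputable def Th (S : ℕ → F) (i : ℕ) : LaurentSeries F :=
  toL (cfQ S i).2.1 * cfB S 0 - toL (cfQ S i).2.2

noncomputable def Th' (S : ℕ → F) (i : ℕ) : LaurentSeries F :=
  toL (cfQ S i).1.1 * cfB S 0 - toL (cfQ S i).1.2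

lemma Th'_succ (S : ℕ → F) (i : ℕ) : Th' S (i + 1) = Th S i := rfl

lemma master (S : ℕ → F) (i : ℕ) (hb : ∀ j, j < i → cfB S j ≠ 0) :
    Th S i = -(cfB S i) * Th' S i ∧
    Th' S i ≠ 0 ∧
    (Th' S i).order = ((cfQ S i).2.1.natDegree : ℤ) ∧
    (cfQ S i).2.1 ≠ 0 ∧
    (cfQ S i).1.1.natDegree ≤ (cfQ S i).2.1.natDegree ∧
    (1 ≤ i → (cfQ S i).1.1 ≠ 0 ∧ (cfQ S i).1.1.natDegree < (cfQ S i).2.1.natDegree) := by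
  induction i with
  | zero =>
    have h1 : Th' S 0 = -1 := by
      simp [Th', cfQ, toL_zero, toL_one]
    have h2 : Th S 0 = cfB S 0 := by
      simp [Th, cfQ, toL_zero, toL_one]
    refine ⟨?_, ?_, ?_, ?_, ?_, ?_⟩
    · rw [h1, h2]; ring
    · rw [h1]; exact neg_ne_zero.2 one_ne_zero
    · rw [h1, show (cfQ S 0).2.1 = 1 from rfl]
      rw [order_neg, order_one, Polynomial.natDegree_one]
      rfl
    · exact one_ne_zero
    · simp [cfQ]
    · omega
  | succ i ih =>
    have hBi : cfB S i ≠ 0 := hb i (by omega)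
    obtain ⟨ih1, ih2, ih3, ih4, ih5, _⟩ := ih (fun j hj => hb j (by omega))
    have ha : cfA S i ≠ 0 := cfA_ne_zero hBi
    obtain ⟨haord, hadeg⟩ := cfA_natDegree hBi
    set a := cfA S i
    set q1 := (cfQ S i).2.1
    set q1' := (cfQ S i).1.1
    have hdmul : (a * q1).natDegree = a.natDegree + q1.natDegree :=
      Polynomial.natDegree_mul ha ih4
    have hlt : q1'.natDegree < (a * q1).natDegree := by omega
    have hdeg : ((cfQ S (i+1)).2.1).natDegree = a.natDegree + q1.natDegree := by
      show (a * q1 + q1').natDegree = _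
      rw [Polynomial.natDegree_add_eq_left_of_natDegree_lt hlt, hdmul]
    have hne : (cfQ S (i+1)).2.1 ≠ 0 := by
      intro h0
      rw [h0, Polynomial.natDegree_zero] at hdeg
      omega
    have hTh : Th S (i+1) = toL a * Th S i + Th' S i := by
      show toL (a * q1 + q1') * cfB S 0 - toL (a * (cfQ S i).2.2 + (cfQ S i).1.2) = _
      rw [toL_add, toL_mul, toL_add, toL_mul, Th, Th']
      ring
    have hkey : Th S (i+1) = -(cfB S (i+1)) * Th' S (i+1) := by
      rw [hTh, Th'_succ, cfB]
      have hpa : toL (polPart (cfB S i)⁻¹) = toL a := rfl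
      rw [hpa]
      have h4 : -((cfB S i)⁻¹ - toL a) * Th S i = toL a * Th S i + -((cfB S i)⁻¹ * Th S i) := by
        ring
      rw [h4, ih1]
      have h5 : -((cfB S i)⁻¹ * (-cfB S i * Th' S i)) = ((cfB S i)⁻¹ * cfB S i) * Th' S i := by
        ring
      rw [h5, inv_mul_cancel₀ hBi, one_mul]
    refine ⟨hkey, ?_, ?_, hne, ?_, ?_⟩
    · rw [Th'_succ, ih1]
      exact mul_ne_zero (neg_ne_zero.2 hBi) ih2
    · rw [Th'_succ, ih1, hdeg]
      rw [show -(cfB S i) * Th' S i = -(cfB S i * Th' S i) by ring, order_neg,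
        order_mul hBi ih2, ih3]
      omega
    · have hfst : (cfQ S (i+1)).1.1 = q1 := rfl
      rw [hfst]
      omega
    · intro _
      have hfst : (cfQ S (i+1)).1.1 = q1 := rfl
      rw [hfst]
      exact ⟨ih4, by omega⟩

open Polynomial HahnSeries

variable {F : Type*} [Field F]

lemma toL_sub (p q : Polynomial F) : toL (p - q) = toL p - toL q := by
  simp [toL_eq_eval₂, Polynomial.eval₂_sub]

lemma coeff_toL_mul (p : Polynomial F) (L : LaurentSeries F) (e : ℤ) :
    (toL p * L).coeff e =
      ∑ j ∈ Finset.range (p.natDegree + 1), p.coeff j * L.coeff (e + j) := by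
  rw [toL, Finset.sum_mul, coeff_sum]
  refine Finset.sum_congr rfl fun j _ => ?_
  have h := coeff_single_mul_add (r := p.coeff j) (x := L) (a := e + j) (b := -(j : ℤ))
  rw [show e + (j : ℤ) + -(j : ℤ) = e by ring] at h
  rw [h]

lemma annCond_coeff (S : ℕ → F) (φ : Polynomial F) (t : ℕ) :
    (toL φ * cfB S 0).coeff ((t : ℤ) + 1) =
      ∑ j ∈ Finset.range (φ.natDegree + 1), φ.coeff j * S (t + j) := by
  rw [coeff_toL_mul]
  refine Finset.sum_congr rfl fun j _ => ?_
  rw [cfB_zero_coeff, if_pos (by omega)]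
  congr 2
  omega

lemma annCond_iff (S : ℕ → F) (n : ℕ) (φ : Polynomial F) :
    AnnCond n S φ ↔
      ∀ e : ℤ, 1 ≤ e → e ≤ (n : ℤ) - φ.natDegree → (toL φ * cfB S 0).coeff e = 0 := by
  constructor
  · intro h e h1 h2
    have he : e = ((e - 1).toNat : ℤ) + 1 := by omega
    rw [he, annCond_coeff]
    exact h _ (by omega)
  · intro h t ht
    rw [← annCond_coeff]
    exact h _ (by omega) (by omega)

lemma seqNum_iff (S : ℕ → F) (n : ℕ) (φ ψ : Polynomial F) (hd : φ.natDegree ≤ n) :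
    SeqNum n S φ ψ ↔ ∀ k : ℕ, ψ.coeff k = (toL φ * cfB S 0).coeff (-(k : ℤ)) := by
  have key : ∀ k : ℕ, (toL φ * cfB S 0).coeff (-(k : ℤ)) =
      ∑ j ∈ Finset.range (φ.natDegree + 1),
        if k + 1 ≤ j ∧ j - (k + 1) < n then φ.coeff j * S (j - (k + 1)) else 0 := by
    intro k
    rw [coeff_toL_mul]
    refine Finset.sum_congr rfl fun j hj => ?_
    rw [Finset.mem_range] at hj
    rw [cfB_zero_coeff]
    by_cases hkj : k + 1 ≤ j
    · rw [if_pos (by omega), if_pos (by omega)]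
      congr 2
      omega
    · rw [if_neg (by omega), if_neg (by omega), mul_zero]
  constructor
  · intro h k; rw [h k, key k]
  · intro h k; rw [h k, key k]

lemma isSolution_of (S : ℕ → F) (n : ℕ) (φ ψ : Polynomial F) (hd : φ.natDegree ≤ n)
    (hφ : φ ≠ 0)
    (h : ∀ e : ℤ, e ≤ (n : ℤ) - φ.natDegree → (toL φ * cfB S 0 - toL ψ).coeff e = 0) :
    IsSolution n S φ ψ := by
  refine ⟨⟨hφ, ?_⟩, ?_⟩
  · rw [annCond_iff]
    intro e h1 h2
    have := h e h2
    rw [HahnSeries.coeff_sub, toL_coeff_pos ψ (by omega), sub_zero] at this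
    exact this
  · rw [seqNum_iff S n φ ψ hd]
    intro k
    have := h (-(k : ℤ)) (by omega)
    rw [HahnSeries.coeff_sub, sub_eq_zero] at this
    rw [this, toL_coeff_neg_nat]

lemma vanish_of_annCond (S : ℕ → F) (n : ℕ) (φ : Polynomial F) (h : AnnCond n S φ) :
    ∀ e : ℤ, e ≤ (n : ℤ) - φ.natDegree →
      (toL φ * cfB S 0 - toL (polPart (toL φ * cfB S 0))).coeff e = 0 := by
  intro e he
  rcases le_or_gt e 0 with h0 | h0
  · exact sub_toL_polPart_coeff _ h0
  · rw [HahnSeries.coeff_sub, toL_coeff_pos _ h0, sub_zero]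
    exact (annCond_iff S n φ).1 h e (by omega) he

lemma min_lemma (S : ℕ → F) (m : ℕ) (hm : 1 ≤ m) (hb : ∀ j, j < m → cfB S j ≠ 0) (n : ℕ)
    (hn : (cfQ S m).1.1.natDegree + (cfQ S m).2.1.natDegree ≤ n)
    (φ : Polynomial F) (hφ : φ ≠ 0) (hA : AnnCond n S φ)
    (hdlt : φ.natDegree < (cfQ S m).2.1.natDegree) : False := by
  obtain ⟨-, hθne, hθord, -, -, hstrict⟩ := master S m hb
  obtain ⟨hq1'ne, -⟩ := hstrict hm
  set θ := Th' S m with hθ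
  set q1' := (cfQ S m).1.1
  set q2' := (cfQ S m).1.2
  set ψ := polPart (toL φ * cfB S 0)
  set L := toL φ * cfB S 0 - toL ψ with hLdef
  have hL : ∀ e : ℤ, e ≤ (n : ℤ) - φ.natDegree → L.coeff e = 0 := vanish_of_annCond S n φ hA
  set e0 : ℤ := ((cfQ S m).2.1.natDegree : ℤ) - φ.natDegree with he0
  have he0pos : 1 ≤ e0 := by omega
  have hG : toL φ * θ - toL q1' * L = toL (q1' * ψ - φ * q2') := by
    rw [toL_sub, toL_mul, toL_mul, hθ, Th', hLdef]
    ring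
  have h1 : (toL φ * θ).coeff e0 ≠ 0 := by
    have horder : (toL φ * θ).order = e0 := by
      rw [order_mul (toL_eq_zero_iff.not.2 hφ) hθne, toL_order hφ, hθord]
      omega
    rw [← horder]
    exact coeff_order_eq_zero.not.2 (mul_ne_zero (toL_eq_zero_iff.not.2 hφ) hθne)
  have h2 : (toL q1' * L).coeff e0 = 0 := by
    rcases eq_or_ne L 0 with hL0 | hLne
    · rw [hL0, mul_zero]; rfl
    · apply coeff_eq_zero_of_lt_order
      rw [order_mul (toL_eq_zero_iff.not.2 hq1'ne) hLne, toL_order hq1'ne]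
      have hordL : (n : ℤ) - φ.natDegree + 1 ≤ L.order := by
        by_contra hc
        push_neg at hc
        exact (coeff_order_eq_zero.not.2 hLne) (hL _ (by omega))
      omega
  have h3 : (toL (q1' * ψ - φ * q2')).coeff e0 = 0 := toL_coeff_pos _ (by omega)
  have := congrArg (fun x => HahnSeries.coeff x e0) hG
  simp only [HahnSeries.coeff_sub] at this
  rw [h2, h3, sub_zero] at this
  exact h1 this

lemma annCond_of (S : ℕ → F) (n m : ℕ)
    (h : ∀ e : ℤ, 1 ≤ e → e ≤ (n : ℤ) - (cfQ S m).2.1.natDegree → (Th S m).coeff e = 0) :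
    AnnCond n S (cfQ S m).2.1 := by
  rw [annCond_iff]
  intro e h1 h2
  have hc : (toL (cfQ S m).2.1 * cfB S 0).coeff e
      = (Th S m).coeff e + (toL (cfQ S m).2.2).coeff e := by
    rw [Th, HahnSeries.coeff_sub]; ring
  rw [hc, h e h1 h2, toL_coeff_pos _ (by omega), add_zero]

lemma ann_exists (S : ℕ → F) (n : ℕ) : ∀ m : ℕ, (∀ j, j < m → cfB S j ≠ 0) →
    n < (cfQ S m).1.1.natDegree + (cfQ S m).2.1.natDegree →
    ∃ φ : Polynomial F, Annihilates n S φ ∧ φ.natDegree < (cfQ S m).2.1.natDegree := by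
  intro m
  induction m with
  | zero =>
    intro _ h
    simp [cfQ] at h
  | succ m ih =>
    intro hb hn
    obtain ⟨-, m2', m3', -, -, m6'⟩ := master S (m + 1) hb
    obtain ⟨hq1ne, hlt⟩ := m6' (by omega)
    have hfst : (cfQ S (m + 1)).1.1 = (cfQ S m).2.1 := rfl
    by_cases hc : n < (cfQ S m).1.1.natDegree + (cfQ S m).2.1.natDegree
    · obtain ⟨φ, h1, h2⟩ := ih (fun j hj => hb j (by omega)) hc
      refine ⟨φ, h1, ?_⟩
      rw [hfst] at hlt
      omega
    · push_neg at hc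
      refine ⟨(cfQ S (m + 1)).1.1, ⟨hq1ne, ?_⟩, hlt⟩
      rw [hfst]
      apply annCond_of
      intro e h1 h2
      apply coeff_eq_zero_of_lt_order
      rw [← Th'_succ, m3']
      rw [hfst] at hn
      omega

end CFAux

open CFAux in
/-- For `S̄ ≠ 0`, `i ≥ 1` with `q⁽ⁱ⁾` existing: `n_i ≤ n < n_{i+1}` iff
`q⁽ⁱ⁻¹⁾` is not a solution for `S|n` and `q⁽ⁱ⁾` is a minimal solution for `S|n`. -/
theorem partialQuotient_minimal_solution_iff {F : Type*} [Field F] (S : ℕ → F)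
    (hS : sbar S ≠ 0) (i n : ℕ) (hi : 1 ≤ i) (hn : 1 ≤ n)
    (hex : cfB S (i - 1) ≠ 0) :
    ((cfQ S i).1.1.natDegree + (cfQ S i).2.1.natDegree ≤ n ∧
        (cfB S i = 0 ∨
          n < (cfQ S (i + 1)).1.1.natDegree + (cfQ S (i + 1)).2.1.natDegree)) ↔
      (¬ IsSolution n S (cfQ S i).1.1 (cfQ S i).1.2 ∧
        IsSolution n S (cfQ S i).2.1 (cfQ S i).2.2 ∧
        (cfQ S i).2.1.natDegree = LC n S) := by
  classical
  have hb : ∀ j, j < i → cfB S j ≠ 0 := fun j hj => cfB_ne_zero_of_le (by omega) hex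
  obtain ⟨m1, m2, m3, m4, m5, m6⟩ := master S i hb
  obtain ⟨hq1'ne, hDlt⟩ := m6 hi
  set q1 := (cfQ S i).2.1 with hq1def
  set q2 := (cfQ S i).2.2 with hq2def
  set q1' := (cfQ S i).1.1 with hq1'def
  set q2' := (cfQ S i).1.2 with hq2'def
  set Dm := q1.natDegree with hDm
  set D' := q1'.natDegree with hD'
  have hfst : (cfQ S (i + 1)).1.1 = q1 := rfl
  constructor
  · rintro ⟨hn1, hn2⟩
    have hvan : ∀ e : ℤ, e ≤ (n : ℤ) - Dm → (Th S i).coeff e = 0 := by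
      have hzero : cfB S i = 0 → ∀ e : ℤ, (Th S i).coeff e = 0 := by
        intro hB0 e
        rw [m1, hB0, neg_zero, zero_mul, HahnSeries.coeff_zero]
      rcases hn2 with hB0 | hlt2
      · intro e _; exact hzero hB0 e
      · by_cases hB0 : cfB S i = 0
        · intro e _; exact hzero hB0 e
        · have hb' : ∀ j, j < i + 1 → cfB S j ≠ 0 := by
            intro j hj
            rcases Nat.lt_succ_iff_lt_or_eq.1 hj with h | rfl
            · exact hb j h
            · exact hB0
          obtain ⟨-, -, m3', -, -, -⟩ := master S (i + 1) hb'
          intro e he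
          apply HahnSeries.coeff_eq_zero_of_lt_order
          rw [← Th'_succ, m3']
          rw [hfst] at hlt2
          omega
    have hsol : IsSolution n S q1 q2 := by
      refine isSolution_of S n q1 q2 (by omega) m4 ?_
      intro e he
      exact hvan e he
    have hnotsol : ¬ IsSolution n S q1' q2' := by
      rintro ⟨⟨-, hA⟩, -⟩
      have h := (annCond_iff S n q1').1 hA (Dm : ℤ) (by omega) (by omega)
      have hc : (toL q1' * cfB S 0).coeff (Dm : ℤ)
          = (Th' S i).coeff (Dm : ℤ) + (toL q2').coeff (Dm : ℤ) := by
        rw [Th', HahnSeries.coeff_sub]; ring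
      rw [hc, toL_coeff_pos _ (by omega), add_zero] at h
      rw [← m3] at h
      exact (HahnSeries.coeff_order_eq_zero.not.2 m2) h
    refine ⟨hnotsol, hsol, ?_⟩
    have hmem : Dm ∈ {d | ∃ φ : Polynomial F, Annihilates n S φ ∧ φ.natDegree = d} :=
      ⟨q1, ⟨m4, hsol.1.2⟩, rfl⟩
    have hlb : ∀ d ∈ {d | ∃ φ : Polynomial F, Annihilates n S φ ∧ φ.natDegree = d},
        Dm ≤ d := by
      rintro d ⟨φ, ⟨hφ, hA⟩, rfl⟩
      by_contra hcon
      push_neg at hcon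
      exact min_lemma S i hi hb n hn1 φ hφ hA hcon
    exact (le_antisymm (le_csInf ⟨Dm, hmem⟩ hlb) (Nat.sInf_le hmem))
  · rintro ⟨hnot, hsol, hLC⟩
    have hn1 : D' + Dm ≤ n := by
      by_contra hc
      push_neg at hc
      obtain ⟨φ, hann, hdeg⟩ := ann_exists S n i hb hc
      have hle : LC n S ≤ φ.natDegree := Nat.sInf_le ⟨φ, hann, rfl⟩
      have hDmLC : (cfQ S i).2.1.natDegree = LC n S := hLC
      omega
    refine ⟨hn1, ?_⟩
    by_cases hB0 : cfB S i = 0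
    · exact Or.inl hB0
    · right
      by_contra hge
      push_neg at hge
      have hb' : ∀ j, j < i + 1 → cfB S j ≠ 0 := by
        intro j hj
        rcases Nat.lt_succ_iff_lt_or_eq.1 hj with h | rfl
        · exact hb j h
        · exact hB0
      obtain ⟨-, m2', m3', -, -, m6'⟩ := master S (i + 1) hb'
      obtain ⟨-, hlt'⟩ := m6' (by omega)
      rw [hfst] at hge hlt'
      have hA := hsol.1.2
      have h := (annCond_iff S n q1).1 hA ((cfQ S (i + 1)).2.1.natDegree : ℤ)
        (by omega) (by omega)
      have hc : (toL q1 * cfB S 0).coeff ((cfQ S (i + 1)).2.1.natDegree : ℤ)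
          = (Th S i).coeff ((cfQ S (i + 1)).2.1.natDegree : ℤ)
            + (toL q2).coeff ((cfQ S (i + 1)).2.1.natDegree : ℤ) := by
        rw [Th, HahnSeries.coeff_sub]; ring
      rw [hc, toL_coeff_pos _ (by omega), add_zero] at h
      rw [← Th'_succ, ← m3'] at h
      exact (HahnSeries.coeff_order_eq_zero.not.2 m2') h
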